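/- arXiv:1202.6431 — 2 statements merged into one kernel-verified Lean document; each statement's English description precedes it below -/
import Mathlib

section
/- Let A be a tensor with nonpositive off-diagonal entries. Then A is an M-tensor if and only if all real eigenvalues of A are positive. -/
open scoped BigOperators

/-- Action of an `(k+1)`-order `n`-dimensional real tensor on a complex vector:
`(A x^{m-1})_i = ∑_{i2,...,im} A_{i i2...im} x_{i2} ⋯ x_{im}` (here `k = m-1`). -/
noncomputable def tApplyC {n k : ℕ} (A : Fin n → (Fin k → Fin n) → ℝ) (x : Fin n → ℂ) (i : Fin n) : ℂ :=
  ∑ j : Fin k → Fin n, (A i j : ℂ) * ∏ t, x (j t)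

/-- Real version of the tensor action. -/
def tApplyR {n k : ℕ} (A : Fin n → (Fin k → Fin n) → ℝ) (x : Fin n → ℝ) (i : Fin n) : ℝ :=
  ∑ j : Fin k → Fin n, A i j * ∏ t, x (j t)

/-- `(lam, x)` is an eigenvalue-eigenvector pair: `x ≠ 0` and `A x^{m-1} = lam x^{[m-1]}`. -/
def IsEigPair {n k : ℕ} (A : Fin n → (Fin k → Fin n) → ℝ) (lam : ℂ) (x : Fin n → ℂ) : Prop :=
  x ≠ 0 ∧ ∀ i, tApplyC A x i = lam * x i ^ k

/-- `lam` is an eigenvalue of `A`. -/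
def IsEig {n k : ℕ} (A : Fin n → (Fin k → Fin n) → ℝ) (lam : ℂ) : Prop :=
  ∃ x, IsEigPair A lam x

/-- The set of moduli of eigenvalues of `A`. -/
def modSet {n k : ℕ} (A : Fin n → (Fin k → Fin n) → ℝ) : Set ℝ :=
  {r | ∃ lam, IsEig A lam ∧ r = ‖lam‖}

/-- The spectral radius: supremum of moduli of eigenvalues. -/
noncomputable def specRad {n k : ℕ} (A : Fin n → (Fin k → Fin n) → ℝ) : ℝ :=
  sSup (modSet A)

/-- The identity tensor: entries `δ_{i i2...im}`. -/
noncomputable def idT (n k : ℕ) : Fin n → (Fin k → Fin n) → ℝ :=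
  fun i j => if (∀ t, j t = i) then 1 else 0

/-- Entrywise nonnegative tensor. -/
def NonnegT {n k : ℕ} (A : Fin n → (Fin k → Fin n) → ℝ) : Prop := ∀ i j, 0 ≤ A i j

/-- `A` is an M-tensor: `A = c I - B` with `B ≥ 0` and `c > ρ(B)`. -/
def IsMTensor {n k : ℕ} (A : Fin n → (Fin k → Fin n) → ℝ) : Prop :=
  ∃ (B : Fin n → (Fin k → Fin n) → ℝ) (c : ℝ),
    NonnegT B ∧ specRad B < c ∧ ∀ i j, A i j = c * idT n k i j - B i j

/-- `ρ(A)` is an eigenvalue of `A` and bounds the modulus of every eigenvalue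
(the Yang–Yang theorem for nonnegative tensors). -/
def HasSpecRad {n k : ℕ} (A : Fin n → (Fin k → Fin n) → ℝ) : Prop :=
  IsEig A (specRad A) ∧ ∀ lam, IsEig A lam → ‖lam‖ ≤ specRad A

/-- Off-diagonal entries of `A` are all nonpositive (`A ∈ 𝕫`). -/
def ZTensor {n k : ℕ} (A : Fin n → (Fin k → Fin n) → ℝ) : Prop :=
  ∀ i j, (¬ ∀ t, j t = i) → A i j ≤ 0

/-- Irreducibility of a tensor. -/
def IrreducibleT {n k : ℕ} (A : Fin n → (Fin k → Fin n) → ℝ) : Prop :=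
  ¬ ∃ S : Set (Fin n), S.Nonempty ∧ S ≠ Set.univ ∧
      ∀ i ∈ S, ∀ j : Fin k → Fin n, (∀ t, j t ∉ S) → A i j = 0

/-- `C_i = ∑_{(i2,...,im) not all equal to i} |A_{i i2...im}|`. -/
noncomputable def offDiagSum {n k : ℕ} (A : Fin n → (Fin k → Fin n) → ℝ) (i : Fin n) : ℝ :=
  ∑ j ∈ Finset.univ.filter (fun j : Fin k → Fin n => ¬ ∀ t, j t = i), |A i j|

lemma tApplyC_idT {n k : ℕ} (x : Fin n → ℂ) (i : Fin n) :
    tApplyC (idT n k) x i = x i ^ k := by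
  unfold tApplyC idT
  rw [Finset.sum_eq_single (fun _ => i)]
  · simp [Finset.prod_const]
  · intro j _ hj
    rw [if_neg]
    · simp
    · intro h; exact hj (funext h)
  · simp

lemma eig_shift {n k : ℕ} (A B : Fin n → (Fin k → Fin n) → ℝ) (c : ℝ)
    (hAB : ∀ i j, A i j = c * idT n k i j - B i j) (x : Fin n → ℂ) (i : Fin n) :
    tApplyC A x i = c * x i ^ k - tApplyC B x i := by
  have h1 : tApplyC A x i =
      (c : ℂ) * ∑ j : Fin k → Fin n, ((idT n k i j : ℝ) : ℂ) * ∏ t, x (j t)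
        - ∑ j : Fin k → Fin n, ((B i j : ℝ) : ℂ) * ∏ t, x (j t) := by
    rw [Finset.mul_sum, ← Finset.sum_sub_distrib]
    unfold tApplyC
    apply Finset.sum_congr rfl
    intro j _
    rw [hAB]; push_cast; ring
  have h2 := tApplyC_idT (n := n) (k := k) x i
  unfold tApplyC at h2
  rw [h1, h2]; rfl

lemma specRad_nonneg {n k : ℕ} (B : Fin n → (Fin k → Fin n) → ℝ)
    (hB : HasSpecRad B) : 0 ≤ specRad B := by
  have h := hB.2 (specRad B) hB.1
  rw [Complex.norm_real, Real.norm_eq_abs] at h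
  exact (abs_nonneg _).trans h

/-- a tensor in `𝕫` is an M-tensor iff all its real eigenvalues are positive
(assuming Yang–Yang for nonnegative tensors). -/
theorem mTensor_iff_real_eig_pos {n k : ℕ} (A : Fin n → (Fin k → Fin n) → ℝ) (hZ : ZTensor A)
    (hYY : ∀ B : Fin n → (Fin k → Fin n) → ℝ, NonnegT B → HasSpecRad B) :
    IsMTensor A ↔ ∀ lam : ℝ, IsEig A (lam : ℂ) → 0 < lam := by
  constructor
  · rintro ⟨B, c, hBnn, hc, hAB⟩ lam ⟨x, hx, hev⟩
    have hsB := hYY B hBnn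
    have hρ0 : 0 ≤ specRad B := specRad_nonneg B hsB
    -- c - lam is an eigenvalue of B
    have hBev : IsEig B (((c - lam : ℝ) : ℂ)) := by
      refine ⟨x, hx, fun i => ?_⟩
      have := eig_shift A B c hAB x i
      rw [hev i] at this
      push_cast
      have : tApplyC B x i = (c : ℂ) * x i ^ k - (lam : ℂ) * x i ^ k := by
        linear_combination this
      rw [this]; ring
    have hle := hsB.2 _ hBev
    rw [Complex.norm_real, Real.norm_eq_abs] at hle
    have : |c - lam| < c := lt_of_le_of_lt hle hc
    have := (abs_lt.mp this).2
    linarith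
  · intro hpos
    -- n is nonempty
    have hne : Nonempty (Fin n) := by
      obtain ⟨⟨x, hx, _⟩, _⟩ := hYY (fun _ _ => 0) (fun _ _ => le_refl 0)
      by_contra h
      exact hx (funext fun i => absurd ⟨i⟩ h)
    obtain ⟨i0⟩ := hne
    set c : ℝ := Finset.univ.sup' ⟨i0, Finset.mem_univ i0⟩
      (fun i => A i (fun _ => i)) with hcdef
    set B : Fin n → (Fin k → Fin n) → ℝ := fun i j => c * idT n k i j - A i j with hBdef
    have hAB : ∀ i j, A i j = c * idT n k i j - B i j := by
      intro i j; simp [hBdef]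
    have hBnn : NonnegT B := by
      intro i j
      by_cases hd : ∀ t, j t = i
      · have hle : A i (fun _ => i) ≤ c :=
          Finset.le_sup' (fun i => A i (fun _ => i)) (Finset.mem_univ i)
        have hj : j = fun _ => i := funext hd
        simp [hBdef, idT, hd, hj]
        linarith
      · have := hZ i j
        simp [hBdef, idT, hd]
        linarith [hZ i j hd]
    have hsB := hYY B hBnn
    obtain ⟨x, hx, hev⟩ := hsB.1
    have hAev : IsEig A (((c - specRad B : ℝ) : ℂ)) := by
      refine ⟨x, hx, fun i => ?_⟩
      rw [eig_shift A B c hAB x i, hev i]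
      push_cast; ring
    have := hpos _ hAev
    exact ⟨B, c, hBnn, by linarith, hAB⟩
end

section
/- If A is an irreducible M-tensor, then τ(A) = c - ρ(B) (where A = cI - B, B nonnegative irreducible, c > ρ(B)) is the unique eigenvalue of A admitting a positive eigenvector. -/
open scoped BigOperators

lemma tApplyC_sub {n k : ℕ} (A B : Fin n → (Fin k → Fin n) → ℝ) (c : ℝ)
    (hA : ∀ i j, A i j = c * idT n k i j - B i j) (x : Fin n → ℂ) (i : Fin n) :
    tApplyC A x i = (c : ℂ) * x i ^ k - tApplyC B x i := by
  unfold tApplyC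
  simp only [hA]
  push_cast
  rw [← tApplyC_idT (k := k) x i]
  unfold tApplyC
  rw [Finset.mul_sum, ← Finset.sum_sub_distrib]
  exact Finset.sum_congr rfl (fun j _ => by ring)

/-- for an irreducible M-tensor `A = cI - B`, `τ(A) = c - ρ(B)` is the unique
eigenvalue of `A` admitting a positive eigenvector (assuming the Chang–Pearson–Zhang
Perron–Frobenius theorem for the irreducible nonnegative tensor `B`). -/
theorem irred_mTensor_unique_pos_eig {n k : ℕ} (A B : Fin n → (Fin k → Fin n) → ℝ) (c : ℝ)
    (hB : NonnegT B) (hirr : IrreducibleT B) (hc : specRad B < c)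
    (hA : ∀ i j, A i j = c * idT n k i j - B i j)
    (hPF : ∃ x0 : Fin n → ℝ, (∀ i, 0 < x0 i) ∧ 0 < specRad B ∧
      IsEigPair B ((specRad B : ℝ) : ℂ) (fun i => (x0 i : ℂ)))
    (hPFuniq : ∀ (μ : ℂ) (x : Fin n → ℝ), x ≠ 0 → (∀ i, 0 ≤ x i) →
      IsEigPair B μ (fun i => (x i : ℂ)) → μ = (specRad B : ℂ)) :
    (∃ x : Fin n → ℝ, (∀ i, 0 < x i) ∧
      IsEigPair A ((c - specRad B : ℝ) : ℂ) (fun i => (x i : ℂ))) ∧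
    (∀ (μ : ℂ) (x : Fin n → ℝ), (∀ i, 0 < x i) →
      IsEigPair A μ (fun i => (x i : ℂ)) → μ = ((c - specRad B : ℝ) : ℂ)) := by
  constructor
  · obtain ⟨x0, hx0pos, _, hne, heig⟩ := hPF
    refine ⟨x0, hx0pos, hne, fun i => ?_⟩
    rw [tApplyC_sub A B c hA, heig i]
    push_cast; ring
  · intro μ x hxpos ⟨hne, heig⟩
    have hBx : IsEigPair B ((c : ℂ) - μ) (fun i => (x i : ℂ)) := by
      refine ⟨hne, fun i => ?_⟩
      have := heig i
      rw [tApplyC_sub A B c hA] at this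
      linear_combination -this
    have hx0 : x ≠ 0 := fun h => hne (funext fun i => by simp [congrFun h i])
    have := hPFuniq ((c : ℂ) - μ) x hx0 (fun i => (hxpos i).le) hBx
    push_cast
    linear_combination -this
end
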